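/- arXiv:2004.14809 — 3 statements merged into one kernel-verified Lean document; each statement's English description precedes it below -/
import Mathlib

section
/- Let H be a connected k-uniform hypergraph with n vertices, at least one edge, maximum degree Δ, minimum degree δ, and signless Laplacian eigenpair (ρ, x). Then x_max − x_min ≥ (√Δ − √δ)/√(nΔ), and equality holds if and only if H is regular. -/
open Finset Matrix

variable {V : Type*} [Fintype V] [DecidableEq V]

/-- The incidence matrix of a hypergraph with vertex type `V` and edge set `E`:
`B(v,e) = 1` if `v ∈ e` and `0` otherwise. -/
def inc (E : Finset (Finset V)) : Matrix V ↥E ℝ :=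
  fun v e => if v ∈ (e : Finset V) then 1 else 0

/-- The signless Laplacian matrix `Q = B * Bᵀ`. -/
def signlessLap (E : Finset (Finset V)) : Matrix V V ℝ :=
  inc E * (inc E)ᵀ

/-- The degree of a vertex: the number of edges containing it. -/
def deg (E : Finset (Finset V)) (v : V) : ℕ :=
  (E.filter fun e => v ∈ e).card

/-- A hypergraph is connected if the reflexive-transitive closure of the relation
"`u ≠ v` and some edge contains both `u` and `v`" relates every pair of vertices. -/
def HConnected (E : Finset (Finset V)) : Prop :=
  ∀ u v : V, Relation.ReflTransGen (fun a b => a ≠ b ∧ ∃ e ∈ E, a ∈ e ∧ b ∈ e) u v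

/-- A hypergraph is regular if all vertices have the same degree. -/
def HRegular (E : Finset (Finset V)) : Prop :=
  ∃ r, ∀ v : V, deg E v = r

/-- A signless Laplacian eigenpair `(ρ, x)`: `x` is entrywise positive,
normalized by `∑ v, x v ^ 2 = 1`, and `Q x = ρ x`. -/
def Eigenpair (E : Finset (Finset V)) (ρ : ℝ) (x : V → ℝ) : Prop :=
  (∀ v, 0 < x v) ∧ (∑ v, x v ^ 2 = 1) ∧ (signlessLap E).mulVec x = ρ • x

lemma Qrow (E : Finset (Finset V)) (x : V → ℝ) (v : V) :
    (signlessLap E).mulVec x v = ∑ e ∈ E.filter (fun e => v ∈ e), ∑ w ∈ e, x w := by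
  rw [Finset.sum_filter, ← Finset.sum_coe_sort E (fun e => if v ∈ e then ∑ w ∈ e, x w else 0)]
  simp only [signlessLap, Matrix.mulVec, Matrix.mul_apply, Matrix.transpose_apply, dotProduct,
    inc]
  simp only [Finset.sum_mul]
  rw [Finset.sum_comm]
  refine Finset.sum_congr rfl fun e _ => ?_
  by_cases hv : v ∈ (e : Finset V)
  · simp [hv, Finset.sum_ite_mem]
  · simp [hv]

lemma all_eq_of_sum_eq {α : Type*} {s : Finset α} {f : α → ℝ} {M : ℝ}
    (h : ∀ a ∈ s, f a ≤ M) (hs : (s.card : ℝ) * M ≤ ∑ a ∈ s, f a) :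
    ∀ a ∈ s, f a = M := by
  intro a ha
  by_contra hne
  have hlt : f a < M := (h a ha).lt_of_ne hne
  have h2 : ∑ b ∈ s, f b < ∑ _b ∈ s, M := Finset.sum_lt_sum h ⟨a, ha, hlt⟩
  rw [Finset.sum_const, nsmul_eq_mul] at h2
  linarith

set_option maxHeartbeats 1000000 in
/-- For a connected `k`-graph with `n` vertices, at least one edge, maximum degree `Δ`,
minimum degree `δ` and signless Laplacian eigenpair `(ρ, x)`:
`x_max − x_min ≥ (√Δ − √δ)/√(nΔ)`, with equality iff `H` is regular. -/
theorem xmax_sub_xmin_lower_bound {V : Type*} [Fintype V] [DecidableEq V] (k : ℕ)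
    (hk : 2 ≤ k) (E : Finset (Finset V)) (hunif : ∀ e ∈ E, e.card = k)
    (hconn : HConnected E) (hE : E.Nonempty)
    (ρ : ℝ) (x : V → ℝ) (hx : Eigenpair E ρ x)
    (Δ δ : ℕ) (hΔ : IsGreatest (Set.range (deg E)) Δ) (hδ : IsLeast (Set.range (deg E)) δ)
    (xmax xmin : ℝ) (hmax : IsGreatest (Set.range x) xmax)
    (hmin : IsLeast (Set.range x) xmin) :
    (Real.sqrt Δ - Real.sqrt δ) / Real.sqrt ((Fintype.card V : ℝ) * Δ) ≤ xmax - xmin ∧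
      (xmax - xmin = (Real.sqrt Δ - Real.sqrt δ) / Real.sqrt ((Fintype.card V : ℝ) * Δ)
        ↔ HRegular E) := by
  obtain ⟨hxpos, hxnorm, heigv⟩ := hx
  have heq : ∀ v, ρ * x v = ∑ e ∈ E.filter (fun e => v ∈ e), ∑ w ∈ e, x w := by
    intro v
    rw [← Qrow]
    have := congrFun heigv v
    simpa [Pi.smul_apply, smul_eq_mul, eq_comm] using this
  have hxle : ∀ v, x v ≤ xmax := fun v => hmax.2 ⟨v, rfl⟩
  have hxge : ∀ v, xmin ≤ x v := fun v => hmin.2 ⟨v, rfl⟩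
  obtain ⟨a, ha⟩ := hmax.1
  obtain ⟨b, hb⟩ := hmin.1
  obtain ⟨u, hu⟩ := hΔ.1
  obtain ⟨w, hw⟩ := hδ.1
  have hminpos : 0 < xmin := hb ▸ hxpos b
  have hmaxpos : 0 < xmax := ha ▸ hxpos a
  have hδΔ : δ ≤ Δ := hδ.2 hΔ.1
  have hk0 : 0 < k := lt_of_lt_of_le (by norm_num) hk
  have hkpos : (0:ℝ) < k := by exact_mod_cast hk0
  -- minimum degree is at least 1
  have hδ1 : 1 ≤ δ := by
    rw [← hw]
    have hexists : ∃ e ∈ E, w ∈ e := by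
      obtain ⟨e0, he0⟩ := hE
      have hcard : e0.card = k := hunif e0 he0
      have hne : e0.Nonempty := Finset.card_pos.mp (by omega)
      obtain ⟨c, hc⟩ := hne
      rcases (hconn w c).cases_head with heqc | ⟨m, hrel, _⟩
      · exact ⟨e0, he0, heqc ▸ hc⟩
      · obtain ⟨_, e, heE, hwe, _⟩ := hrel
        exact ⟨e, heE, hwe⟩
    obtain ⟨e, heE, hwe⟩ := hexists
    have : (E.filter fun e => w ∈ e).Nonempty := ⟨e, Finset.mem_filter.2 ⟨heE, hwe⟩⟩
    simpa [deg] using Finset.card_pos.2 this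
  have hΔ1 : 1 ≤ Δ := le_trans hδ1 hδΔ
  have hΔRpos : (0:ℝ) < Δ := by exact_mod_cast hΔ1
  -- edge sum bounds
  have hSle : ∀ e ∈ E, ∑ z ∈ e, x z ≤ (k:ℝ) * xmax := by
    intro e he
    calc ∑ z ∈ e, x z ≤ ∑ _z ∈ e, xmax := Finset.sum_le_sum fun z _ => hxle z
      _ = (e.card : ℝ) * xmax := by rw [Finset.sum_const, nsmul_eq_mul]
      _ = (k:ℝ) * xmax := by rw [hunif e he]
  have hSge : ∀ e ∈ E, (k:ℝ) * xmin ≤ ∑ z ∈ e, x z := by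
    intro e he
    calc (k:ℝ) * xmin = (e.card : ℝ) * xmin := by rw [hunif e he]
      _ = ∑ _z ∈ e, xmin := by rw [Finset.sum_const, nsmul_eq_mul]
      _ ≤ ∑ z ∈ e, x z := Finset.sum_le_sum fun z _ => hxge z
  -- eigen equation bounds
  have hub : ∀ v, ρ * x v ≤ (deg E v : ℝ) * ((k:ℝ) * xmax) := by
    intro v
    rw [heq v]
    calc ∑ e ∈ E.filter (fun e => v ∈ e), ∑ z ∈ e, x z
        ≤ ∑ e ∈ E.filter (fun e => v ∈ e), (k:ℝ) * xmax :=
          Finset.sum_le_sum fun e he => hSle e (Finset.mem_filter.1 he).1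
      _ = (deg E v : ℝ) * ((k:ℝ) * xmax) := by
          rw [Finset.sum_const, nsmul_eq_mul]; rfl
  have hlb : ∀ v, (deg E v : ℝ) * ((k:ℝ) * xmin) ≤ ρ * x v := by
    intro v
    rw [heq v]
    calc (deg E v : ℝ) * ((k:ℝ) * xmin)
        = ∑ e ∈ E.filter (fun e => v ∈ e), (k:ℝ) * xmin := by
          rw [Finset.sum_const, nsmul_eq_mul]; rfl
      _ ≤ ∑ e ∈ E.filter (fun e => v ∈ e), ∑ z ∈ e, x z :=
          Finset.sum_le_sum fun e he => hSge e (Finset.mem_filter.1 he).1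
  -- positivity of ρ
  have hρpos : 0 < ρ := by
    have h1 := hlb u
    rw [hu] at h1
    have h2 : (0:ℝ) < (Δ:ℝ) * ((k:ℝ) * xmin) := by positivity
    nlinarith [hxpos u]
  -- key inequality: √Δ · xmin ≤ √δ · xmax
  have hA : (Δ:ℝ) * ((k:ℝ) * xmin) ≤ ρ * xmax := by
    have h1 := hlb u
    rw [hu] at h1
    nlinarith [hxle u]
  have hB : ρ * xmin ≤ (δ:ℝ) * ((k:ℝ) * xmax) := by
    have h1 := hub w
    rw [hw] at h1
    nlinarith [hxge w]
  have hsq : (Δ:ℝ) * xmin^2 ≤ (δ:ℝ) * xmax^2 := by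
    have h3 : (k:ℝ) * ((Δ:ℝ) * xmin^2) ≤ (k:ℝ) * ((δ:ℝ) * xmax^2) := by
      nlinarith [mul_le_mul_of_nonneg_right hA hminpos.le,
        mul_le_mul_of_nonneg_right hB hmaxpos.le]
    exact le_of_mul_le_mul_left h3 hkpos
  have key1 : Real.sqrt Δ * xmin ≤ Real.sqrt δ * xmax := by
    have h4 : Real.sqrt ((Δ:ℝ) * xmin^2) ≤ Real.sqrt ((δ:ℝ) * xmax^2) :=
      Real.sqrt_le_sqrt hsq
    rwa [Real.sqrt_mul (by positivity), Real.sqrt_mul (by positivity),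
      Real.sqrt_sq hminpos.le, Real.sqrt_sq hmaxpos.le] at h4
  -- √n · xmax ≥ 1
  have : Nonempty V := ⟨u⟩
  set n : ℕ := Fintype.card V with hn
  have hn1 : 1 ≤ n := Fintype.card_pos
  have hnRpos : (0:ℝ) < n := by exact_mod_cast hn1
  have hsumle : (1:ℝ) ≤ (n:ℝ) * xmax^2 := by
    calc (1:ℝ) = ∑ v, x v ^ 2 := hxnorm.symm
      _ ≤ ∑ _v : V, xmax^2 := Finset.sum_le_sum fun v _ =>
          pow_le_pow_left₀ (hxpos v).le (hxle v) 2
      _ = (n:ℝ) * xmax^2 := by rw [Finset.sum_const, nsmul_eq_mul]; rfl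
  have hNmax : 1 ≤ Real.sqrt n * xmax := by
    have h5 : Real.sqrt 1 ≤ Real.sqrt ((n:ℝ) * xmax^2) := Real.sqrt_le_sqrt hsumle
    rwa [Real.sqrt_one, Real.sqrt_mul (by positivity), Real.sqrt_sq hmaxpos.le] at h5
  have hApos : 0 < Real.sqrt (Δ:ℝ) := Real.sqrt_pos.2 hΔRpos
  have hNpos : 0 < Real.sqrt (n:ℝ) := Real.sqrt_pos.2 hnRpos
  have hBA : Real.sqrt (δ:ℝ) ≤ Real.sqrt (Δ:ℝ) := Real.sqrt_le_sqrt (by exact_mod_cast hδΔ)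
  -- main inequality
  have hmain : (Real.sqrt Δ - Real.sqrt δ) / Real.sqrt ((n : ℝ) * Δ) ≤ xmax - xmin := by
    rw [Real.sqrt_mul (by positivity), div_le_iff₀ (by positivity)]
    nlinarith [mul_nonneg (sub_nonneg.2 hBA) (sub_nonneg.2 hNmax),
      mul_le_mul_of_nonneg_left key1 hNpos.le]
  refine ⟨hmain, ?_, ?_⟩
  · -- equality → regular
    intro heqq
    by_cases hΔδ : Δ = δ
    · exact ⟨Δ, fun v => le_antisymm (hΔ.2 ⟨v, rfl⟩) (hΔδ ▸ hδ.2 ⟨v, rfl⟩)⟩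
    · have hlt : Real.sqrt (δ:ℝ) < Real.sqrt (Δ:ℝ) := by
        have hc : (δ:ℝ) < (Δ:ℝ) := by
          exact_mod_cast lt_of_le_of_ne hδΔ (Ne.symm hΔδ)
        exact Real.sqrt_lt_sqrt (by positivity) hc
      have hsubpos : 0 < Real.sqrt (Δ:ℝ) - Real.sqrt (δ:ℝ) := sub_pos.2 hlt
      have e1 : (xmax - xmin) * (Real.sqrt n * Real.sqrt Δ)
          = Real.sqrt Δ - Real.sqrt δ := by
        rw [heqq, Real.sqrt_mul (by positivity)]
        field_simp
      have hNle : Real.sqrt n * xmax ≤ 1 := by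
        have e2 : Real.sqrt n * xmax * (Real.sqrt Δ - Real.sqrt δ)
            ≤ (xmax - xmin) * (Real.sqrt n * Real.sqrt Δ) := by
          nlinarith [mul_le_mul_of_nonneg_left key1 hNpos.le]
        rw [e1] at e2
        refine le_of_mul_le_mul_right ?_ hsubpos
        rw [one_mul]
        exact e2
      have hNeq : Real.sqrt n * xmax = 1 := le_antisymm hNle hNmax
      have hnx : (n:ℝ) * xmax^2 = 1 := by
        have h6 : (Real.sqrt n * xmax)^2 = 1 := by rw [hNeq]; norm_num
        rwa [mul_pow, Real.sq_sqrt (by positivity)] at h6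
      have hconst : ∀ v, x v = xmax := by
        have hall := all_eq_of_sum_eq (s := Finset.univ) (f := fun v => x v ^ 2)
          (M := xmax^2) (fun v _ => pow_le_pow_left₀ (hxpos v).le (hxle v) 2)
          (by rw [hxnorm]; exact le_of_eq hnx)
        intro v
        have h7 : x v ^ 2 = xmax ^ 2 := hall v (Finset.mem_univ v)
        nlinarith [hxpos v, hxle v]
      -- with constant eigenvector, all degrees are equal
      have hdeg : ∀ v, ρ * xmax = (deg E v : ℝ) * ((k:ℝ) * xmax) := by
        intro v
        have hv := heq v
        rw [hconst v] at hv
        rw [hv]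
        calc ∑ e ∈ E.filter (fun e => v ∈ e), ∑ z ∈ e, x z
            = ∑ e ∈ E.filter (fun e => v ∈ e), (k:ℝ) * xmax := by
              refine Finset.sum_congr rfl fun e he => ?_
              have heE := (Finset.mem_filter.1 he).1
              calc ∑ z ∈ e, x z = ∑ _z ∈ e, xmax :=
                    Finset.sum_congr rfl fun z _ => hconst z
                _ = (e.card : ℝ) * xmax := by rw [Finset.sum_const, nsmul_eq_mul]
                _ = (k:ℝ) * xmax := by rw [hunif e heE]
          _ = (deg E v : ℝ) * ((k:ℝ) * xmax) := by
              rw [Finset.sum_const, nsmul_eq_mul]; rfl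
      refine ⟨deg E a, fun v => ?_⟩
      have h8 : (deg E v : ℝ) * ((k:ℝ) * xmax) = (deg E a : ℝ) * ((k:ℝ) * xmax) := by
        rw [← hdeg v, ← hdeg a]
      have h9 : (deg E v : ℝ) = (deg E a : ℝ) :=
        mul_right_cancel₀ (mul_pos hkpos hmaxpos).ne' h8
      exact_mod_cast h9
  · -- regular → equality
    intro hreg
    obtain ⟨r, hr⟩ := hreg
    have hΔr : Δ = r := by
      obtain ⟨u', hu'⟩ := hΔ.1
      rw [← hu', hr u']
    have hδr : δ = r := by
      obtain ⟨w', hw'⟩ := hδ.1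
      rw [← hw', hr w']
    -- ρ = r·k
    have hρeq : ρ = (r:ℝ) * k := by
      have h1 := hub a
      rw [ha, hr a] at h1
      have h2 := hlb b
      rw [hb, hr b] at h2
      have hle : ρ ≤ (r:ℝ) * k := by nlinarith [hmaxpos]
      have hge : (r:ℝ) * k ≤ ρ := by nlinarith [hminpos]
      linarith
    -- propagation: x is constant
    have key : ∀ p q : V, x p = xmax → (p ≠ q ∧ ∃ e ∈ E, p ∈ e ∧ q ∈ e) → x q = xmax := by
      rintro p q hp ⟨-, e, heE, hpe, hqe⟩
      have hsum : ∀ e' ∈ E.filter (fun e' => p ∈ e'), (∑ z ∈ e', x z) = (k:ℝ) * xmax := by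
        apply all_eq_of_sum_eq
        · intro e' he'
          exact hSle e' (Finset.mem_filter.1 he').1
        · have hc : ((E.filter (fun e' => p ∈ e')).card : ℝ) = (r:ℝ) := by
            have : deg E p = r := hr p
            exact_mod_cast this
          rw [hc, ← heq p, hp, hρeq]
          exact le_of_eq (by ring)
      have h1 := hsum e (Finset.mem_filter.2 ⟨heE, hpe⟩)
      have h2 := all_eq_of_sum_eq (s := e) (f := x) (M := xmax)
        (fun z _ => hxle z)
        (by rw [h1, hunif e heE])
      exact h2 q hqe
    have hax : ∀ v, x v = xmax := by
      intro v
      have h := hconn a v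
      induction h with
      | refl => exact ha
      | tail hst hrel ih => exact key _ _ ih hrel
    have hxmaxmin : xmax = xmin := ((hax b).symm.trans hb)
    rw [hΔr, hδr, hxmaxmin]
    simp
end

section
/- Let H be a connected k-uniform hypergraph with m ≥ 1 edges and signless Laplacian eigenpair (ρ, x). Then x(min) ≤ √(ρ/m) ≤ x(max). Moreover, if H is regular then both inequalities are equalities. -/
open Finset Matrix

variable {V : Type*} [Fintype V] [DecidableEq V]

lemma incT_mulVec (E : Finset (Finset V)) (x : V → ℝ) :
    (inc E)ᵀ.mulVec x = fun e : ↥E => ∑ v ∈ (e : Finset V), x v := by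
  funext e
  simp [Matrix.mulVec, dotProduct, inc, Matrix.transpose_apply, ite_mul,
    Finset.sum_ite_mem]

lemma lap_mulVec (E : Finset (Finset V)) (x : V → ℝ) (v : V) :
    (signlessLap E).mulVec x v
      = ∑ e : ↥E, (if v ∈ (e : Finset V) then 1 else 0) * ∑ w ∈ (e : Finset V), x w := by
  rw [signlessLap, ← Matrix.mulVec_mulVec, incT_mulVec]
  simp [Matrix.mulVec, dotProduct, inc]

lemma rho_eq_sum_sq (E : Finset (Finset V)) (ρ : ℝ) (x : V → ℝ)
    (hnorm : ∑ v, x v ^ 2 = 1)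
    (heig : (signlessLap E).mulVec x = ρ • x) :
    ρ = ∑ e : ↥E, (∑ v ∈ (e : Finset V), x v) ^ 2 := by
  have hv : x ᵥ* inc E = (inc E)ᵀ *ᵥ x := by
    funext e
    simp [Matrix.vecMul, Matrix.mulVec, dotProduct, inc, Matrix.transpose_apply,
      mul_comm]
  have h1 : x ⬝ᵥ ((signlessLap E).mulVec x) = ρ := by
    rw [heig, dotProduct_smul]
    simp only [smul_eq_mul]
    have : x ⬝ᵥ x = 1 := by simpa [dotProduct, sq] using hnorm
    rw [this, mul_one]
  rw [← h1, signlessLap, ← Matrix.mulVec_mulVec, Matrix.dotProduct_mulVec, hv, incT_mulVec]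
  simp [dotProduct, sq]

/-- For a connected `k`-graph with `m ≥ 1` edges and signless Laplacian eigenpair
`(ρ, x)`: `x(min) ≤ √(ρ/m) ≤ x(max)`; if `H` is regular both are equalities.
Here `x(e) = ∑ v ∈ e, x v`. -/
theorem edge_sum_extremes_vs_sqrt_rho_div_m {V : Type*} [Fintype V] [DecidableEq V]
    (k : ℕ) (hk : 2 ≤ k) (E : Finset (Finset V)) (hunif : ∀ e ∈ E, e.card = k)
    (hconn : HConnected E) (hE : E.Nonempty)
    (ρ : ℝ) (x : V → ℝ) (hx : Eigenpair E ρ x)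
    (xemin xemax : ℝ)
    (hemin : IsLeast ((fun e : Finset V => ∑ v ∈ e, x v) '' ↑E) xemin)
    (hemax : IsGreatest ((fun e : Finset V => ∑ v ∈ e, x v) '' ↑E) xemax) :
    (xemin ≤ Real.sqrt (ρ / E.card) ∧ Real.sqrt (ρ / E.card) ≤ xemax) ∧
      (HRegular E →
        xemin = Real.sqrt (ρ / E.card) ∧ Real.sqrt (ρ / E.card) = xemax) := by
  obtain ⟨hpos, hnorm, heig⟩ := hx
  set m := E.card with hm
  have hm0 : 0 < m := Finset.card_pos.mpr hE
  have hmR : (0:ℝ) < (m:ℝ) := by exact_mod_cast hm0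
  have hρ : ρ = ∑ e : ↥E, (∑ v ∈ (e : Finset V), x v) ^ 2 := rho_eq_sum_sq E ρ x hnorm heig
  have hcard_univ : (Finset.univ : Finset ↥E).card = m := by
    rw [Finset.card_univ, Fintype.card_coe]
  -- min/max bounds on each edge sum
  have hminle : ∀ e : ↥E, xemin ≤ ∑ v ∈ (e : Finset V), x v := fun e =>
    hemin.2 ⟨(e : Finset V), e.2, rfl⟩
  have hmaxge : ∀ e : ↥E, ∑ v ∈ (e : Finset V), x v ≤ xemax := fun e =>
    hemax.2 ⟨(e : Finset V), e.2, rfl⟩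
  obtain ⟨e₁, he₁, he₁min⟩ := hemin.1
  have he₁E : e₁ ∈ E := he₁
  have hepos : ∀ e ∈ E, 0 < ∑ v ∈ e, x v := by
    intro e he
    apply Finset.sum_pos (fun v _ => hpos v)
    rw [← Finset.card_pos, hunif e he]; omega
  have hminpos : 0 < xemin := he₁min ▸ hepos e₁ he₁E
  have hmaxpos : 0 < xemax :=
    lt_of_lt_of_le hminpos ((hminle ⟨e₁, he₁E⟩).trans (hmaxge ⟨e₁, he₁E⟩))
  -- part 1
  have hconstsum : ∀ c : ℝ, ∑ _e : ↥E, c = (m:ℝ) * c := by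
    intro c; rw [Finset.sum_const, hcard_univ, nsmul_eq_mul]
  have hlow : (m:ℝ) * xemin ^ 2 ≤ ρ := by
    rw [hρ, ← hconstsum (xemin ^ 2)]
    exact Finset.sum_le_sum fun e _ =>
      pow_le_pow_left₀ hminpos.le (hminle e) 2
  have hhigh : ρ ≤ (m:ℝ) * xemax ^ 2 := by
    rw [hρ, ← hconstsum (xemax ^ 2)]
    exact Finset.sum_le_sum fun e _ =>
      pow_le_pow_left₀ (hminpos.le.trans (hminle e)) (hmaxge e) 2
  have part1a : xemin ≤ Real.sqrt (ρ / m) := by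
    rw [← Real.sqrt_sq hminpos.le]
    apply Real.sqrt_le_sqrt
    rw [le_div_iff₀ hmR]; linarith
  have part1b : Real.sqrt (ρ / m) ≤ xemax := by
    rw [← Real.sqrt_sq hmaxpos.le]
    apply Real.sqrt_le_sqrt
    rw [div_le_iff₀ hmR]; linarith
  refine ⟨⟨part1a, part1b⟩, ?_⟩
  -- part 2 : regular case
  rintro ⟨r, hr⟩
  obtain ⟨v₀, hv₀⟩ : ∃ v, v ∈ e₁ := by
    have : e₁.card = k := hunif e₁ he₁E
    have : 0 < e₁.card := by omega
    exact Finset.card_pos.mp this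
  have hr1 : 1 ≤ r := by
    rw [← hr v₀]
    exact Finset.card_pos.mpr ⟨e₁, Finset.mem_filter.mpr ⟨he₁E, hv₀⟩⟩
  have hrR : (0:ℝ) < (r:ℝ) := by exact_mod_cast hr1
  have hVne : Nonempty V := ⟨v₀⟩
  -- degree as a filtered-subtype card
  have hdegcard : ∀ a : V,
      (Finset.univ.filter fun e : ↥E => a ∈ (e : Finset V)).card = deg E a := by
    intro a
    rw [deg, Finset.card_filter, Finset.card_filter]
    rw [← Finset.sum_attach E (fun e => if a ∈ e then 1 else 0)]
    rfl
  -- eigen equation at a vertex, filtered form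
  have heigat : ∀ a : V,
      ∑ e ∈ Finset.univ.filter (fun e : ↥E => a ∈ (e : Finset V)),
        (∑ w ∈ (e : Finset V), x w) = ρ * x a := by
    intro a
    have := congrFun heig a
    rw [lap_mulVec] at this
    simp only [Pi.smul_apply, smul_eq_mul] at this
    rw [← this, Finset.sum_filter]
    exact Finset.sum_congr rfl fun e _ => by split <;> simp
  -- sum identities to get ρ = k * r
  have hsum1 : ∑ e : ↥E, (∑ v ∈ (e : Finset V), x v) = ∑ v, (deg E v : ℝ) * x v := by
    have : ∀ e : ↥E, ∑ v ∈ (e : Finset V), x v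
        = ∑ v : V, if v ∈ (e : Finset V) then x v else 0 := by
      intro e; rw [Finset.sum_ite_mem, Finset.univ_inter]
    simp only [this]
    rw [Finset.sum_comm]
    refine Finset.sum_congr rfl fun v _ => ?_
    rw [← hdegcard v, Finset.card_filter]
    push_cast
    rw [Finset.sum_mul]
    exact Finset.sum_congr rfl fun e _ => by split <;> simp
  have hS : (0:ℝ) < ∑ v, x v := Finset.sum_pos (fun v _ => hpos v) Finset.univ_nonempty
  have hρrk : ρ = (k : ℝ) * r := by
    have h2 : ∑ v, ρ * x v = ρ * ∑ v, x v := by rw [Finset.mul_sum]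
    have h3 : ∑ v, ρ * x v = (k:ℝ) * ∑ e : ↥E, (∑ v ∈ (e : Finset V), x v) := by
      have := fun v => (heigat v).symm
      calc ∑ v, ρ * x v
          = ∑ v, ∑ e ∈ Finset.univ.filter (fun e : ↥E => v ∈ (e : Finset V)),
              (∑ w ∈ (e : Finset V), x w) := by
            exact Finset.sum_congr rfl fun v _ => (heigat v).symm
        _ = ∑ v : V, ∑ e : ↥E,
              (if v ∈ (e : Finset V) then (∑ w ∈ (e : Finset V), x w) else 0) := by
            exact Finset.sum_congr rfl fun v _ => (Finset.sum_filter _ _)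
        _ = ∑ e : ↥E, ∑ v : V,
              (if v ∈ (e : Finset V) then (∑ w ∈ (e : Finset V), x w) else 0) :=
            Finset.sum_comm
        _ = (k:ℝ) * ∑ e : ↥E, (∑ v ∈ (e : Finset V), x v) := by
            rw [Finset.mul_sum]
            refine Finset.sum_congr rfl fun e _ => ?_
            rw [Finset.sum_ite_mem, Finset.univ_inter, Finset.sum_const, hunif _ e.2,
              nsmul_eq_mul]
    have h4 : ∑ v, (deg E v : ℝ) * x v = (r:ℝ) * ∑ v, x v := by
      rw [Finset.mul_sum]
      exact Finset.sum_congr rfl fun v _ => by rw [hr v]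
    have : ρ * ∑ v, x v = (k:ℝ) * ((r:ℝ) * ∑ v, x v) := by
      rw [← h2, h3, hsum1, h4]
    have := mul_right_cancel₀ (ne_of_gt hS) (by linarith [this] : ρ * ∑ v, x v = ((k:ℝ) * r) * ∑ v, x v)
    exact this
  -- maximum of x
  obtain ⟨vM, -, hvM⟩ := Finset.exists_max_image (Finset.univ : Finset V) x ⟨v₀, Finset.mem_univ v₀⟩
  set M := x vM with hMdef
  have hMpos : 0 < M := hpos vM
  -- propagation step
  have hstep : ∀ a : V, x a = M → ∀ e ∈ E, a ∈ e → ∀ w ∈ e, x w = M := by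
    intro a ha e he hae w hwe
    have hbound : ∀ f : ↥E, f ∈ Finset.univ.filter (fun f : ↥E => a ∈ (f : Finset V)) →
        (∑ v ∈ (f : Finset V), x v) ≤ (k:ℝ) * M := by
      intro f _
      calc ∑ v ∈ (f : Finset V), x v ≤ ∑ _v ∈ (f : Finset V), M :=
            Finset.sum_le_sum fun v _ => hvM v (Finset.mem_univ v)
        _ = (k:ℝ) * M := by rw [Finset.sum_const, hunif _ f.2, nsmul_eq_mul]
    have hsumeq : ∑ f ∈ Finset.univ.filter (fun f : ↥E => a ∈ (f : Finset V)),
        (∑ v ∈ (f : Finset V), x v)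
        = ∑ f ∈ Finset.univ.filter (fun f : ↥E => a ∈ (f : Finset V)), (k:ℝ) * M := by
      rw [heigat a, ha, Finset.sum_const, hdegcard a, hr a, nsmul_eq_mul, hρrk]
      ring
    have hallk := (Finset.sum_eq_sum_iff_of_le hbound).mp hsumeq
    have heq : ∑ v ∈ e, x v = (k:ℝ) * M := hallk ⟨e, he⟩ (Finset.mem_filter.mpr ⟨Finset.mem_univ _, hae⟩)
    have hsumeq2 : ∑ v ∈ e, x v = ∑ _v ∈ e, M := by
      rw [heq, Finset.sum_const, hunif e he, nsmul_eq_mul]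
    exact (Finset.sum_eq_sum_iff_of_le (fun v _ => hvM v (Finset.mem_univ v))).mp hsumeq2 w hwe
  -- constancy
  have hconst : ∀ u, x u = M := by
    intro u
    have h := hconn vM u
    induction h with
    | refl => rfl
    | tail hab step ih =>
      obtain ⟨-, e, heE, hbe, hce⟩ := step
      exact hstep _ ih e heE hbe _ hce
  -- global counting
  set n := Fintype.card V with hn
  have hn0 : 0 < n := Fintype.card_pos
  have hnM : (n:ℝ) * M ^ 2 = 1 := by
    rw [← hnorm]
    rw [Finset.sum_congr rfl fun v _ => by rw [hconst v]]
    rw [Finset.sum_const, Finset.card_univ, nsmul_eq_mul]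
  have hnrmk : n * r = m * k := by
    have h1 : ∑ v : V, deg E v = ∑ e ∈ E, e.card := by
      simp only [deg, Finset.card_filter]
      rw [Finset.sum_comm]
      exact Finset.sum_congr rfl fun e _ => by simp [Finset.sum_ite_mem]
    have h2 : ∑ v : V, deg E v = n * r := by
      simp [hr, Finset.sum_const, Finset.card_univ, hn, mul_comm]
    have h3 : ∑ e ∈ E, e.card = m * k := by
      rw [Finset.sum_congr rfl hunif, Finset.sum_const, smul_eq_mul]
    omega
  have hkM : xemin = (k:ℝ) * M ∧ xemax = (k:ℝ) * M := by
    constructor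
    · rw [← he₁min]
      show ∑ v ∈ e₁, x v = (k:ℝ) * M
      rw [Finset.sum_congr rfl fun v _ => hconst v, Finset.sum_const,
        hunif e₁ he₁E, nsmul_eq_mul]
    · obtain ⟨e₂, he₂, he₂max⟩ := hemax.1
      rw [← he₂max]
      show ∑ v ∈ e₂, x v = (k:ℝ) * M
      rw [Finset.sum_congr rfl fun v _ => hconst v, Finset.sum_const,
        hunif e₂ he₂, nsmul_eq_mul]
  have hsqrt : Real.sqrt (ρ / m) = (k:ℝ) * M := by
    have hρm : ρ / m = ((k:ℝ) * M) ^ 2 := by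
      have hnr : (n:ℝ) * r = (m:ℝ) * k := by exact_mod_cast hnrmk
      have key : ρ = ((k:ℝ) * M) ^ 2 * m := by
        calc ρ = (k:ℝ) * r * ((n:ℝ) * M ^ 2) := by rw [hnM, mul_one, hρrk]
          _ = ((n:ℝ) * r) * ((k:ℝ) * M ^ 2) := by ring
          _ = ((m:ℝ) * k) * ((k:ℝ) * M ^ 2) := by rw [hnr]
          _ = ((k:ℝ) * M) ^ 2 * m := by ring
      rw [key, mul_div_assoc, div_self (ne_of_gt hmR), mul_one]
    rw [hρm, Real.sqrt_sq (by positivity)]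
  exact ⟨by rw [hkM.1, hsqrt], by rw [hsqrt, hkM.2]⟩
end

section
/- Let H be a connected k-uniform hypergraph with at least one edge, maximum degree Δ, and signless Laplacian eigenpair (ρ, x). Then (ρ/Δ)·x_max ≤ x(max) ≤ k·x_max. Moreover, if H is regular then both inequalities are equalities. -/
open Finset Matrix

variable {V : Type*} [Fintype V] [DecidableEq V]

lemma lap_apply (E : Finset (Finset V)) (x : V → ℝ) (v : V) :
    (signlessLap E).mulVec x v = ∑ e ∈ E.filter (fun e => v ∈ e), ∑ u ∈ e, x u := by
  classical
  simp only [signlessLap, inc, Matrix.mulVec, Matrix.mul_apply, Matrix.transpose_apply,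
    dotProduct, Finset.sum_mul, ite_mul, one_mul, zero_mul]
  rw [Finset.sum_comm]
  rw [Finset.sum_filter]
  rw [← Finset.sum_attach E (fun e => if v ∈ e then ∑ u ∈ e, x u else 0)]
  refine Finset.sum_congr rfl fun e _ => ?_
  by_cases hv : v ∈ (e : Finset V) <;> simp [hv, Finset.sum_ite_mem, Finset.inter_comm]

/-- For a connected `k`-graph with at least one edge, maximum degree `Δ` and signless
Laplacian eigenpair `(ρ, x)`: `(ρ/Δ) x_max ≤ x(max) ≤ k x_max`; if `H` is regular
both are equalities. -/
theorem edge_max_bounds {V : Type*} [Fintype V] [DecidableEq V] (k : ℕ)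
    (hk : 2 ≤ k) (E : Finset (Finset V)) (hunif : ∀ e ∈ E, e.card = k)
    (hconn : HConnected E) (hE : E.Nonempty)
    (ρ : ℝ) (x : V → ℝ) (hx : Eigenpair E ρ x)
    (Δ : ℕ) (hΔ : IsGreatest (Set.range (deg E)) Δ)
    (xmax : ℝ) (hmax : IsGreatest (Set.range x) xmax)
    (xemax : ℝ) (hemax : IsGreatest ((fun e : Finset V => ∑ v ∈ e, x v) '' ↑E) xemax) :
    (ρ / (Δ : ℝ) * xmax ≤ xemax ∧ xemax ≤ (k : ℝ) * xmax) ∧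
      (HRegular E → ρ / (Δ : ℝ) * xmax = xemax ∧ xemax = (k : ℝ) * xmax) := by
  classical
  obtain ⟨hxpos, hnorm, heig⟩ := hx
  have hQ : ∀ v, ρ * x v = ∑ e ∈ E.filter (fun e => v ∈ e), ∑ u ∈ e, x u := by
    intro v
    have := congrFun heig v
    rw [lap_apply] at this
    simpa [Pi.smul_apply, smul_eq_mul] using this.symm
  obtain ⟨v0, hv0⟩ := hmax.1
  have hub : ∀ v, x v ≤ xmax := fun v => hmax.2 ⟨v, rfl⟩
  obtain ⟨e0, he0E, he0⟩ := hemax.1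
  have he0E : e0 ∈ E := he0E
  have heub : ∀ e ∈ E, ∑ u ∈ e, x u ≤ xemax := fun e he => hemax.2 ⟨e, he, rfl⟩
  have hxmaxpos : 0 < xmax := hv0 ▸ hxpos v0
  have he0ne : e0.Nonempty := by rw [← Finset.card_pos, hunif e0 he0E]; omega
  have hxemaxpos : 0 < xemax := he0 ▸ Finset.sum_pos (fun u _ => hxpos u) he0ne
  have hΔub : ∀ v, deg E v ≤ Δ := fun v => hΔ.2 ⟨v, rfl⟩
  have hΔpos : 0 < Δ := by
    obtain ⟨e, heE⟩ := hE
    obtain ⟨v, hv⟩ : e.Nonempty := by rw [← Finset.card_pos, hunif e heE]; omega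
    have h1 : 0 < deg E v :=
      Finset.card_pos.mpr ⟨e, Finset.mem_filter.mpr ⟨heE, hv⟩⟩
    exact lt_of_lt_of_le h1 (hΔub v)
  have hΔR : (0:ℝ) < (Δ:ℝ) := Nat.cast_pos.mpr hΔpos
  -- edge sum bounds
  have hek : ∀ e ∈ E, ∑ u ∈ e, x u ≤ (k:ℝ) * xmax := by
    intro e he
    calc ∑ u ∈ e, x u ≤ ∑ _u ∈ e, xmax := Finset.sum_le_sum fun u _ => hub u
      _ = (e.card : ℝ) * xmax := by rw [Finset.sum_const, nsmul_eq_mul]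
      _ = (k:ℝ) * xmax := by rw [hunif e he]
  have h2 : xemax ≤ (k:ℝ) * xmax := he0 ▸ hek e0 he0E
  have h1' : ρ * xmax ≤ (Δ:ℝ) * xemax := by
    rw [← hv0, hQ v0]
    calc ∑ e ∈ E.filter (fun e => v0 ∈ e), ∑ u ∈ e, x u
        ≤ ∑ _e ∈ E.filter (fun e => v0 ∈ e), xemax :=
          Finset.sum_le_sum fun e he => heub e (Finset.mem_of_mem_filter e he)
      _ = (deg E v0 : ℝ) * xemax := by rw [Finset.sum_const, nsmul_eq_mul]; rfl
      _ ≤ (Δ:ℝ) * xemax := by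
          apply mul_le_mul_of_nonneg_right _ hxemaxpos.le
          exact_mod_cast hΔub v0
  have h1 : ρ / (Δ:ℝ) * xmax ≤ xemax := by
    rw [div_mul_eq_mul_div, div_le_iff₀ hΔR]
    linarith
  refine ⟨⟨h1, h2⟩, ?_⟩
  rintro ⟨r, hr⟩
  have hdeg : ∀ v, deg E v = Δ := by
    obtain ⟨v1, hv1⟩ := hΔ.1
    intro v; rw [hr v, ← hr v1, hv1]
  obtain ⟨vm, -, hvm⟩ := Finset.exists_min_image Finset.univ x ⟨v0, Finset.mem_univ v0⟩
  set m := x vm with hm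
  have hvm' : ∀ v, m ≤ x v := fun v => hvm v (Finset.mem_univ v)
  have hmpos : 0 < m := hxpos vm
  have hlbe : ∀ e ∈ E, (k:ℝ) * m ≤ ∑ u ∈ e, x u := by
    intro e he
    calc (k:ℝ) * m = (e.card : ℝ) * m := by rw [hunif e he]
      _ = ∑ _u ∈ e, m := by rw [Finset.sum_const, nsmul_eq_mul]
      _ ≤ ∑ u ∈ e, x u := Finset.sum_le_sum fun u _ => hvm' u
  have hρge : (Δ:ℝ) * k * m ≤ ρ * m := by
    rw [hQ vm]
    calc (Δ:ℝ) * k * m = ∑ _e ∈ E.filter (fun e => vm ∈ e), (k:ℝ) * m := by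
          rw [Finset.sum_const, nsmul_eq_mul]
          have : (E.filter (fun e => vm ∈ e)).card = Δ := hdeg vm
          rw [this]; ring
      _ ≤ ∑ e ∈ E.filter (fun e => vm ∈ e), ∑ u ∈ e, x u :=
          Finset.sum_le_sum fun e he => hlbe e (Finset.mem_of_mem_filter e he)
  have hρle : ρ * xmax ≤ (Δ:ℝ) * k * xmax := by
    rw [← hv0, hQ v0]
    calc ∑ e ∈ E.filter (fun e => v0 ∈ e), ∑ u ∈ e, x u
        ≤ ∑ _e ∈ E.filter (fun e => v0 ∈ e), (k:ℝ) * xmax :=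
          Finset.sum_le_sum fun e he => hek e (Finset.mem_of_mem_filter e he)
      _ = (deg E v0 : ℝ) * ((k:ℝ) * xmax) := by rw [Finset.sum_const, nsmul_eq_mul]; rfl
      _ = (Δ:ℝ) * k * x v0 := by rw [hdeg v0, hv0]; ring
  have hρ : ρ = (Δ:ℝ) * k := by
    have hA : ρ ≤ (Δ:ℝ) * k := le_of_mul_le_mul_right (by linarith) hxmaxpos
    have hB : (Δ:ℝ) * k ≤ ρ := le_of_mul_le_mul_right (by linarith) hmpos
    linarith
  have key : ∀ v, x v = m → ∀ e ∈ E, v ∈ e → ∀ u ∈ e, x u = m := by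
    intro v hv e heE hve u hue
    have hsum : ∑ e' ∈ E.filter (fun e' => v ∈ e'), (k:ℝ) * m
        = ∑ e' ∈ E.filter (fun e' => v ∈ e'), ∑ u' ∈ e', x u' := by
      rw [← hQ v, hv, Finset.sum_const, nsmul_eq_mul]
      have : (E.filter (fun e' => v ∈ e')).card = Δ := hdeg v
      rw [this, hρ]; ring
    have heq := (Finset.sum_eq_sum_iff_of_le
      (fun e' he' => hlbe e' (Finset.mem_of_mem_filter e' he'))).mp hsum
    have hedge : (k:ℝ) * m = ∑ u' ∈ e, x u' :=
      heq e (Finset.mem_filter.mpr ⟨heE, hve⟩)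
    have hsum2 : ∑ _u ∈ e, m = ∑ u' ∈ e, x u' := by
      rw [Finset.sum_const, nsmul_eq_mul, ← hedge, hunif e heE]
    have := (Finset.sum_eq_sum_iff_of_le (fun u' _ => hvm' u')).mp hsum2 u hue
    exact this.symm
  have hconst : ∀ v, x v = m := by
    intro v
    induction hconn vm v with
    | refl => rfl
    | tail hab hstep ih =>
        obtain ⟨hne, e, heE, hae, hbe⟩ := hstep
        exact key _ ih e heE hae _ hbe
  have hxm : xmax = m := by rw [← hv0, hconst v0]
  have hxe : xemax = (k:ℝ) * m := by
    rw [← he0]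
    show ∑ v ∈ e0, x v = (k:ℝ) * m
    rw [Finset.sum_congr rfl (fun u _ => hconst u), Finset.sum_const, nsmul_eq_mul,
      hunif e0 he0E]
  constructor
  · rw [hρ, hxm, hxe]
    field_simp
  · rw [hxe, hxm]
end
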